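/- Let T : X ⇉ X* be a pseudomonotone operator and let P(T) be the set of maximal pseudomonotone extensions of T. Then: (1) T^ρ = ⋃_{M ∈ P(T)} M; (2) T^ρρ = ⋂_{M ∈ P(T)} M; (3) T is maximal pseudomonotone if, and only if, T = T^ρ. -/

import Mathlib

open NormedSpace

section PseudoDefs

variable {X : Type*} [NormedAddCommGroup X] [NormedSpace ℝ X]

/-- `(x,x*) ∼_p (y,y*)`: the pseudomonotone relation. -/
def PseudoRel (p q : X × StrongDual ℝ X) : Prop :=
  min (q.2 (p.1 - q.1)) (p.2 (q.1 - p.1)) < 0 ∨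
    (q.2 (p.1 - q.1) = 0 ∧ p.2 (q.1 - p.1) = 0)

/-- An operator (identified with its graph) is pseudomonotone if any two of its
elements are pseudomonotonically related. -/
def Pseudomonotone (T : Set (X × StrongDual ℝ X)) : Prop :=
  ∀ p ∈ T, ∀ q ∈ T, PseudoRel p q

/-- The pseudomonotone polar `T^ρ`. -/
def pPolar (T : Set (X × StrongDual ℝ X)) : Set (X × StrongDual ℝ X) :=
  {p | ∀ q ∈ T, PseudoRel p q}

/-- The monotone polar `T^μ`. -/
def mPolar (T : Set (X × StrongDual ℝ X)) : Set (X × StrongDual ℝ X) :=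
  {p | ∀ q ∈ T, 0 ≤ (p.2 - q.2) (p.1 - q.1)}

/-- A monotone operator. -/
def MonotoneOp (T : Set (X × StrongDual ℝ X)) : Prop :=
  ∀ p ∈ T, ∀ q ∈ T, 0 ≤ (p.2 - q.2) (p.1 - q.1)

/-- The image `T(x)` of an operator at a point. -/
def img (T : Set (X × StrongDual ℝ X)) (x : X) : Set (StrongDual ℝ X) :=
  {x' | (x, x') ∈ T}

/-- The domain of an operator. -/
def opDom (T : Set (X × StrongDual ℝ X)) : Set X :=
  {x | (img T x).Nonempty}

/-- The set of zeros `Z_T` of an operator. -/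
def zeros (T : Set (X × StrongDual ℝ X)) : Set X :=
  {x | (x, (0 : StrongDual ℝ X)) ∈ T}

/-- The strict conic hull `cone_∘(A)` of a subset of the dual. -/
def coneS (A : Set (StrongDual ℝ X)) : Set (StrongDual ℝ X) :=
  {v | ∃ t : ℝ, 0 < t ∧ ∃ a ∈ A, v = t • a}

/-- The conic hull `cone(A)` of a subset of the dual. -/
def coneH (A : Set (StrongDual ℝ X)) : Set (StrongDual ℝ X) :=
  {v | ∃ t : ℝ, 0 ≤ t ∧ ∃ a ∈ A, v = t • a}

/-- The operator `cone_∘(T)`, with `(cone_∘(T))(x) = cone_∘(T(x))`. -/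
def coneOp (T : Set (X × StrongDual ℝ X)) : Set (X × StrongDual ℝ X) :=
  {p | p.2 ∈ coneS (img T p.1)}

/-- The normal cone `N_C(x)`. -/
def normalCone (C : Set X) (x : X) : Set (StrongDual ℝ X) :=
  {x' | ∀ y ∈ C, x' (y - x) ≤ 0}

/-- The strict normal cone `N°_C(x)`. -/
def strictNormalCone (C : Set X) (x : X) : Set (StrongDual ℝ X) :=
  {x' | ∀ y ∈ C, x' (y - x) < 0}

/-- `V_T(x) = {y : ∃ y* ∈ T(y), ⟨x - y, y*⟩ > 0}`. -/
def Vset (T : Set (X × StrongDual ℝ X)) (x : X) : Set X :=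
  {y | ∃ y' ∈ img T y, 0 < y' (x - y)}

/-- `W_T(x) = {y : ∃ y* ∈ T(y), ⟨x - y, y*⟩ = 0}`. -/
def Wset (T : Set (X × StrongDual ℝ X)) (x : X) : Set X :=
  {y | ∃ y' ∈ img T y, y' (x - y) = 0}

/-- Maximal pseudomonotonicity. -/
def MaxPseudomonotone (T : Set (X × StrongDual ℝ X)) : Prop :=
  Pseudomonotone T ∧ ∀ S : Set (X × StrongDual ℝ X), T ⊆ S → Pseudomonotone S → T = S

/-- Pre-maximal pseudomonotonicity: both `T` and `T^ρ` are pseudomonotone. -/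
def PreMaxPseudomonotone (T : Set (X × StrongDual ℝ X)) : Prop :=
  Pseudomonotone T ∧ Pseudomonotone (pPolar T)

/-- The restriction `T|_A` of an operator to a set `A`. -/
def restrictOp (T : Set (X × StrongDual ℝ X)) (A : Set X) : Set (X × StrongDual ℝ X) :=
  {p ∈ T | p.1 ∈ A}

/-- `L(T,x) = {y : ∃ y* ∈ T(y), ⟨x - y, y*⟩ ≥ 0}`. -/
def Lset (T : Set (X × StrongDual ℝ X)) (x : X) : Set X :=
  {y | ∃ y' ∈ img T y, 0 ≤ y' (x - y)}

/-- The operator `T̂ `: `T̂(x) = N_{L(T,x)}(x)` on `Z_T`, `cone_∘(T(x))` on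
`dom(T) \ Z_T`, and `∅` outside `dom(T)`. -/
def hatOp (T : Set (X × StrongDual ℝ X)) : Set (X × StrongDual ℝ X) :=
  {p | (p.1 ∈ zeros T ∧ p.2 ∈ normalCone (Lset T p.1) p.1) ∨
       (p.1 ∈ opDom T ∧ p.1 ∉ zeros T ∧ p.2 ∈ coneS (img T p.1))}

/-- Two operators are equivalent: same domain, same zeros, and the same conic
hulls of images outside the set of zeros. -/
def EquivOp (T S : Set (X × StrongDual ℝ X)) : Prop :=
  opDom T = opDom S ∧ zeros T = zeros S ∧
    ∀ x ∈ opDom T \ zeros T, coneH (img T x) = coneH (img S x)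

/-- `D`-maximal pseudomonotonicity (Hadjisavvas): `T` is pseudomonotone and some
equivalent pseudomonotone operator has no proper pseudomonotone extension with
the same domain. -/
def DMaxPseudomonotone (T : Set (X × StrongDual ℝ X)) : Prop :=
  Pseudomonotone T ∧ ∃ S : Set (X × StrongDual ℝ X), EquivOp T S ∧ Pseudomonotone S ∧
    ∀ S' : Set (X × StrongDual ℝ X), S ⊆ S' → Pseudomonotone S' → opDom S' = opDom S → S' = S

/-- The solution set of the Stampacchia variational inequality problem. -/
def SVIsol (T : Set (X × StrongDual ℝ X)) (K : Set X) : Set X :=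
  {x ∈ K | ∃ x' ∈ img T x, ∀ y ∈ K, 0 ≤ x' (y - x)}

/-- The solution set of the Minty variational inequality problem. -/
def MVIsol (T : Set (X × StrongDual ℝ X)) (K : Set X) : Set X :=
  {x ∈ K | ∀ q ∈ T, q.1 ∈ K → q.2 (x - q.1) ≤ 0}

/-- The linear perturbation `T + α*`. -/
def pertOp (T : Set (X × StrongDual ℝ X)) (α : StrongDual ℝ X) : Set (X × StrongDual ℝ X) :=
  {p | ∃ q ∈ T, p = (q.1, q.2 + α)}

end PseudoDefs

section Aux

variable {X : Type*} [NormedAddCommGroup X] [NormedSpace ℝ X]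

lemma pseudoRel_refl (p : X × StrongDual ℝ X) : PseudoRel p p := by
  right; simp

lemma pseudoRel_symm {p q : X × StrongDual ℝ X} (h : PseudoRel p q) : PseudoRel q p := by
  rcases h with h | h
  · left; rwa [min_comm]
  · right; exact ⟨h.2, h.1⟩

lemma subset_pPolar {T : Set (X × StrongDual ℝ X)} (hT : Pseudomonotone T) : T ⊆ pPolar T :=
  fun p hp q hq => hT p hp q hq

lemma pPolar_anti {S T : Set (X × StrongDual ℝ X)} (h : S ⊆ T) : pPolar T ⊆ pPolar S :=
  fun p hp q hq => hp q (h hq)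

lemma insert_pm {T : Set (X × StrongDual ℝ X)} {p} (hT : Pseudomonotone T)
    (hp : p ∈ pPolar T) : Pseudomonotone (insert p T) := by
  intro a ha b hb
  rcases ha with rfl | ha <;> rcases hb with rfl | hb
  · exact pseudoRel_refl _
  · exact hp b hb
  · exact pseudoRel_symm (hp a ha)
  · exact hT a ha b hb

lemma maxpm_eq_pPolar {M : Set (X × StrongDual ℝ X)} (hM : MaxPseudomonotone M) :
    M = pPolar M := by
  apply Set.Subset.antisymm (subset_pPolar hM.1)
  intro p hp
  have := hM.2 (insert p M) (Set.subset_insert p M) (insert_pm hM.1 hp)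
  rw [this]; exact Set.mem_insert p M

lemma exists_max_ext {T : Set (X × StrongDual ℝ X)} (hT : Pseudomonotone T) :
    ∃ M, T ⊆ M ∧ MaxPseudomonotone M := by
  obtain ⟨M, hTM, hM⟩ := zorn_subset_nonempty {S : Set (X × StrongDual ℝ X) | Pseudomonotone S}
    (fun c hcS hchain hne => by
      refine ⟨⋃₀ c, ?_, fun s hs => Set.subset_sUnion_of_mem hs⟩
      intro p hp q hq
      obtain ⟨s, hs, hps⟩ := hp
      obtain ⟨t, ht, hqt⟩ := hq
      rcases hchain.total hs ht with h | h
      · exact hcS ht p (h hps) q hqt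
      · exact hcS hs p hps q (h hqt)) T hT
  exact ⟨M, hTM, hM.1, fun S hMS hS => Set.Subset.antisymm hMS (hM.2 hS hMS)⟩

end Aux

theorem pPolar_maximal_extensions
    {X : Type*} [NormedAddCommGroup X] [NormedSpace ℝ X]
    (T : Set (X × StrongDual ℝ X)) (hT : Pseudomonotone T) :
    pPolar T = ⋃₀ {M | T ⊆ M ∧ MaxPseudomonotone M} ∧
    pPolar (pPolar T) = ⋂₀ {M | T ⊆ M ∧ MaxPseudomonotone M} ∧
    (MaxPseudomonotone T ↔ T = pPolar T) := by
  refine ⟨?_, ?_, ?_⟩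
  · apply Set.Subset.antisymm
    · intro p hp
      obtain ⟨M, hTM, hM⟩ := exists_max_ext (insert_pm hT hp)
      exact ⟨M, ⟨(Set.subset_insert p T).trans hTM, hM⟩, hTM (Set.mem_insert p T)⟩
    · rintro p ⟨M, ⟨hTM, hM⟩, hpM⟩
      exact pPolar_anti hTM ((maxpm_eq_pPolar hM) ▸ hpM)
  · apply Set.Subset.antisymm
    · rintro p hp M ⟨hTM, hM⟩
      have hMsub : M ⊆ pPolar T := fun q hq => pPolar_anti hTM ((maxpm_eq_pPolar hM) ▸ hq)
      rw [maxpm_eq_pPolar hM]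
      exact fun q hq => hp q (hMsub hq)
    · intro p hp q hq
      obtain ⟨M, hTM, hM⟩ := exists_max_ext (insert_pm hT hq)
      have hpM : p ∈ M := hp M ⟨(Set.subset_insert q T).trans hTM, hM⟩
      exact hM.1 p hpM q (hTM (Set.mem_insert q T))
  · constructor
    · intro hmax
      apply Set.Subset.antisymm (subset_pPolar hT)
      intro p hp
      have := hmax.2 (insert p T) (Set.subset_insert p T) (insert_pm hT hp)
      rw [this]; exact Set.mem_insert p T
    · intro heq
      refine ⟨hT, fun S hTS hS => Set.Subset.antisymm hTS ?_⟩
      intro p hp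
      rw [heq]
      exact fun q hq => hS p hp q (hTS hq)
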